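/- arXiv:2212.04541 — 7 statements merged into one kernel-verified Lean document; each statement's English description precedes it below -/
import Mathlib

section
/- Let h : ℝ → ℝ be strictly convex at 0 on [0,1], i.e., h(s·x) < (1 − s)·h(0) + s·h(x) for all x ∈ (0,1] and all s ∈ (0,1), and suppose the right directional derivative exists: Tendsto (fun s => (h(s) − h(0))/s) (𝓝[>] 0) (𝓝 L). Then h(1) − h(0) > L. -/
open Filter Topology

/-- Strict gradient inequality for a function strictly convex at `0` on `[0,1]`
that is directionally differentiable at `0`. -/
theorem strict_gradient_inequality (h : ℝ → ℝ) (L : ℝ)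
    (hconv : ∀ x ∈ Set.Ioc (0 : ℝ) 1, ∀ s ∈ Set.Ioo (0 : ℝ) 1,
      h (s * x) < (1 - s) * h 0 + s * h x)
    (hL : Tendsto (fun s => (h s - h 0) / s) (𝓝[>] 0) (𝓝 L)) :
    h 1 - h 0 > L := by
  set c : ℝ := 2 * (h (1/2) - h 0) with hc
  have hLc : L ≤ c := by
    apply le_of_tendsto hL
    filter_upwards [Ioo_mem_nhdsGT_of_mem (Set.left_mem_Ico.mpr (by norm_num : (0:ℝ) < 1/2))]
      with s hs
    have hs0 : 0 < s := hs.1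
    have hs2 : s < 1/2 := hs.2
    have key := hconv (1/2) (by norm_num) (2*s) ⟨by linarith, by linarith⟩
    have : h s < (1 - 2*s) * h 0 + 2*s * h (1/2) := by
      have : (2*s) * (1/2) = s := by ring
      rwa [this] at key
    rw [div_le_iff₀ hs0]
    nlinarith
  have hclt : c < h 1 - h 0 := by
    have key := hconv 1 (by norm_num) (1/2) (by norm_num)
    simp only [mul_one] at key
    simp only [hc]
    linarith
  linarith
end

section
/- Define f : ℝ → ℝ by f(x) = 0 if x ≤ 0 and f(x) = −x if x > 0. Then: (a) f is convex at 0, i.e., f(s·x) ≤ (1 − s)·f(0) + s·f(x) for all x ∈ ℝ and s ∈ (0,1); (b) Tendsto (fun s => (f(s) − f(0))/s) (𝓝[>] 0) (𝓝 (−1)), so the directional derivative of f at 0 in direction 1 is −1; (c) Tendsto (fun s => (f(−s) − f(0))/s) (𝓝[>] 0) (𝓝 0), so the directional derivative of f at 0 in direction −1 is 0. In particular −Df(0; −1) = 0 > −1 = Df(0; 1), so the inequality −Df(x₀; −X) ≤ Df(x₀; X) can fail for a function that is convex only at the single point x₀. -/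
open Filter Topology

/-- The function `f(x) = 0` for `x ≤ 0`, `f(x) = -x` for `x > 0`. -/
noncomputable def f12 : ℝ → ℝ := fun x => if x ≤ 0 then 0 else -x

/-- `f12` is convex at `0`, its directional derivative at `0` in direction `1` is
`-1` and in direction `-1` is `0`; so `-Df(0; -1) = 0 > -1 = Df(0; 1)`. -/
theorem convex_at_point_dirderiv_inequality_fails :
    (∀ x : ℝ, ∀ s ∈ Set.Ioo (0 : ℝ) 1,
        f12 (s * x) ≤ (1 - s) * f12 0 + s * f12 x) ∧
      Tendsto (fun s => (f12 s - f12 0) / s) (𝓝[>] 0) (𝓝 (-1)) ∧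
      Tendsto (fun s => (f12 (-s) - f12 0) / s) (𝓝[>] 0) (𝓝 0) := by
  refine ⟨?_, ?_, ?_⟩
  · intro x s hs
    rcases le_or_gt x 0 with hx | hx
    · have hsx : s * x ≤ 0 := mul_nonpos_of_nonneg_of_nonpos hs.1.le hx
      simp [f12, hsx, hx]
    · have hsx : ¬ s * x ≤ 0 := not_le.mpr (mul_pos hs.1 hx)
      simp only [f12, hsx, not_le.mpr hx, if_false, if_pos le_rfl]
      nlinarith [hs.1, hx]
  · have : ∀ s ∈ Set.Ioi (0:ℝ), (f12 s - f12 0) / s = -1 := by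
      intro s hs
      have : ¬ s ≤ 0 := not_le.mpr hs
      simp only [f12, this, if_false, if_pos le_rfl, sub_zero]
      rw [neg_div, div_self (ne_of_gt (Set.mem_Ioi.mp hs))]
    exact tendsto_const_nhds.congr' (eventually_nhdsWithin_of_forall fun s h => (this s h).symm)
  · have : ∀ s ∈ Set.Ioi (0:ℝ), (f12 (-s) - f12 0) / s = 0 := by
      intro s hs
      have : (-s : ℝ) ≤ 0 := neg_nonpos.mpr (le_of_lt hs)
      simp [f12, this]
    exact tendsto_const_nhds.congr' (eventually_nhdsWithin_of_forall fun s h => (this s h).symm)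
end

section
/- Define f : ℝ → ℝ by f(x) = 1 if x ≤ 1 and f(x) = −log x if x > 1. Then: (a) for every y > 0 and every s ∈ [0,1], f(y^s) ≤ (1 − s)·f(1) + s·f(y) = (1 − s) + s·f(y), i.e., f is convex at the point 1 along the geodesics γ(s) = y^s of the Hadamard manifold ℝ_{>0} with metric ⟨v,w⟩_x = vw/x²; (b) Tendsto (fun s => (f(2^s) − f(1))/s) (𝓝[>] 0) atBot, i.e., the directional derivative of f at 1 in the direction of the geodesic s ↦ 2^s does not exist (the difference quotient tends to −∞). Hence a function convex at a single point of a Hadamard manifold need not be directionally differentiable there. -/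
open Filter Topology Real

/-- The function `f(x) = 1` for `x ≤ 1`, `f(x) = -log x` for `x > 1`, on the
Hadamard manifold `ℝ_{>0}` with geodesics `s ↦ y^s` emanating from `1`. -/
noncomputable def f13 : ℝ → ℝ := fun x => if x ≤ 1 then 1 else -Real.log x

/-- `f13` is convex at the point `1` along all geodesics `s ↦ y^s`, yet its
difference quotient at `1` along the geodesic `s ↦ 2^s` tends to `-∞`, so `f13`
is not directionally differentiable at `1`. (Counterexample to Remark 2.1(i) of
S.-L. Chen.) -/
theorem convex_at_point_not_dirdifferentiable :
    (∀ y : ℝ, 0 < y → ∀ s ∈ Set.Icc (0 : ℝ) 1,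
        f13 (y ^ s) ≤ (1 - s) * f13 1 + s * f13 y) ∧
      Tendsto (fun s : ℝ => (f13 ((2 : ℝ) ^ s) - f13 1) / s) (𝓝[>] 0) atBot := by
  constructor
  · intro y hy s hs
    obtain ⟨hs0, hs1⟩ := hs
    rcases le_or_gt y 1 with hy1 | hy1
    · have h1 : y ^ s ≤ 1 := Real.rpow_le_one hy.le hy1 hs0
      simp [f13, h1, hy1]
    · rcases eq_or_lt_of_le hs0 with h0 | h0
      · rw [← h0]
        simp [f13]
      · have h1 : 1 < y ^ s :=
          (Real.one_lt_rpow_iff_of_pos hy).mpr (Or.inl ⟨hy1, h0⟩)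
        simp [f13, not_le.mpr h1, not_le.mpr hy1, Real.log_rpow hy]
        nlinarith [Real.log_pos hy1]
  · have heq : ∀ᶠ s in 𝓝[>] (0:ℝ),
        (f13 ((2:ℝ) ^ s) - f13 1) / s = -Real.log 2 - 1 / s := by
      filter_upwards [self_mem_nhdsWithin] with s (hs : 0 < s)
      have h1 : 1 < (2:ℝ) ^ s :=
        (Real.one_lt_rpow_iff_of_pos (by norm_num)).mpr (Or.inl ⟨one_lt_two, hs⟩)
      simp only [f13, not_le.mpr h1, if_neg, if_pos le_rfl, ↓reduceIte,
        Real.log_rpow (by norm_num : (0:ℝ) < 2)]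
      field_simp
    refine Tendsto.congr' (heq.mono fun _ h => h.symm) ?_
    have h2 : Tendsto (fun s : ℝ => 1 / s) (𝓝[>] 0) atTop := by
      simpa using tendsto_inv_nhdsGT_zero
    have h3 : Tendsto (fun s : ℝ => -(1 / s)) (𝓝[>] 0) atBot :=
      tendsto_neg_atTop_atBot.comp h2
    simpa [sub_eq_add_neg] using tendsto_atBot_add_const_left (𝓝[>] (0:ℝ)) (-Real.log 2) h3
end

section
/- Define w : ℝ → ℝ by w(s) = (π/2)·(1 + s) if s is rational (i.e., s ∈ Set.range ((↑) : ℚ → ℝ)) and w(s) = (π/2)·(1 − s) if s is irrational. Then: (a) there is no L ∈ ℝ with Tendsto (fun s => (w(s) − w(0))/s) (𝓝[>] 0) (𝓝 L), i.e., the half-width function is not directionally differentiable; (b) Tendsto (fun s => |w(s) − w(0)|/s) (𝓝[>] 0) (𝓝 (π/2)). Consequently, for the interval-valued function with constant center c ≡ 0 and half-width w, the gH-difference quotient endpoints (−|w(s) − w(0)|/s and |w(s) − w(0)|/s) converge to −π/2 and π/2 respectively, so the gH-directional derivative exists and equals ⟨0, π/2⟩ even though the half-width (and hence the endpoint functions)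 are not directionally differentiable. -/
open Filter Topology Real Classical

/-- Half-width function: `w(s) = (π/2)(1+s)` for rational `s`,
`w(s) = (π/2)(1-s)` for irrational `s`. -/
noncomputable def w14 : ℝ → ℝ := fun s =>
  if s ∈ Set.range ((↑) : ℚ → ℝ) then (π / 2) * (1 + s) else (π / 2) * (1 - s)

lemma w14_zero : w14 0 = π / 2 := by
  have h : (0:ℝ) ∈ Set.range ((↑) : ℚ → ℝ) := ⟨0, by norm_num⟩
  show (if _ then _ else _) = _
  rw [if_pos h]; ring

lemma w14_rat (q : ℚ) : w14 q = (π / 2) * (1 + q) := by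
  simp [w14, Set.mem_range.mpr ⟨q, rfl⟩]

lemma w14_irr {s : ℝ} (h : Irrational s) : w14 s = (π / 2) * (1 - s) := by
  show (if _ then _ else _) = _
  rw [if_neg h]

lemma rat_seq_tendsto : Tendsto (fun n : ℕ => ((1 : ℝ) / (n + 1))) atTop (𝓝[>] 0) := by
  refine tendsto_nhdsWithin_iff.mpr ⟨tendsto_one_div_add_atTop_nhds_zero_nat, ?_⟩
  filter_upwards with n
  exact Set.mem_Ioi.mpr (by positivity)

lemma irr_seq_tendsto :
    Tendsto (fun n : ℕ => (Real.sqrt 2 / (n + 1))) atTop (𝓝[>] 0) := by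
  refine tendsto_nhdsWithin_iff.mpr ⟨?_, ?_⟩
  · have := tendsto_one_div_add_atTop_nhds_zero_nat.const_mul (Real.sqrt 2)
    simpa [div_eq_mul_inv, one_div] using this
  · filter_upwards with n
    have h2 : (0:ℝ) < Real.sqrt 2 := Real.sqrt_pos.mpr (by norm_num)
    exact Set.mem_Ioi.mpr (by positivity)

/-- The half-width function `w14` is not directionally differentiable at `0`,
yet `|w14(s) - w14(0)|/s → π/2`, so the gH-directional derivative of the
interval-valued function with center `0` and half-width `w14` exists and equals
`⟨0, π/2⟩`. (The necessary part of Lemma 3.2 of S.-L. Chen fails.) -/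
theorem gH_differentiable_but_halfwidth_not :
    (¬∃ L : ℝ, Tendsto (fun s => (w14 s - w14 0) / s) (𝓝[>] 0) (𝓝 L)) ∧
      Tendsto (fun s => |w14 s - w14 0| / s) (𝓝[>] 0) (𝓝 (π / 2)) := by
  constructor
  · rintro ⟨L, hL⟩
    -- along rationals the quotient is π/2
    have hrat : Tendsto (fun n : ℕ => (w14 ((1:ℝ)/(n+1)) - w14 0) / ((1:ℝ)/(n+1)))
        atTop (𝓝 L) := hL.comp rat_seq_tendsto
    have hrat' : (fun n : ℕ => (w14 ((1:ℝ)/(n+1)) - w14 0) / ((1:ℝ)/(n+1)))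
        = fun _ => π / 2 := by
      funext n
      have hq : ((1:ℝ)/(n+1)) = ((1 / (n+1) : ℚ) : ℝ) := by push_cast; ring
      have hne : ((1:ℝ)/(n+1)) ≠ 0 := by positivity
      rw [hq, w14_rat, w14_zero, ← hq]
      field_simp
      ring
    rw [hrat'] at hrat
    have hLpi : L = π / 2 := tendsto_nhds_unique hrat tendsto_const_nhds
    -- along irrationals the quotient is -π/2
    have hirr : Tendsto (fun n : ℕ => (w14 (Real.sqrt 2/(n+1)) - w14 0) / (Real.sqrt 2/(n+1)))
        atTop (𝓝 L) := hL.comp irr_seq_tendsto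
    have hirr' : (fun n : ℕ => (w14 (Real.sqrt 2/(n+1)) - w14 0) / (Real.sqrt 2/(n+1)))
        = fun _ => -(π / 2) := by
      funext n
      have hI : Irrational (Real.sqrt 2 / (n+1)) := by
        have : Irrational (Real.sqrt 2 / ((n+1 : ℕ) : ℝ)) :=
          irrational_sqrt_two.div_natCast (by omega)
        simpa [Nat.cast_add, Nat.cast_one] using this
      have h2 : (0:ℝ) < Real.sqrt 2 := Real.sqrt_pos.mpr (by norm_num)
      have hne : (Real.sqrt 2/(n+1)) ≠ 0 := by positivity
      rw [w14_irr hI, w14_zero]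
      field_simp
      ring
    rw [hirr'] at hirr
    have hLpi' : L = -(π / 2) := tendsto_nhds_unique hirr tendsto_const_nhds
    have : (0:ℝ) < π := Real.pi_pos
    rw [hLpi] at hLpi'
    linarith
  · have : ∀ᶠ s in 𝓝[>] (0:ℝ), |w14 s - w14 0| / s = π / 2 := by
      filter_upwards [self_mem_nhdsWithin] with s hs
      have hs' : (0:ℝ) < s := hs
      have hpi : (0:ℝ) < π := Real.pi_pos
      rcases Classical.em (s ∈ Set.range ((↑) : ℚ → ℝ)) with h | h
      · rw [show w14 s = (π/2)*(1+s) from by simp [w14, h], w14_zero]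
        rw [show (π/2)*(1+s) - π/2 = (π/2)*s by ring, abs_of_pos (by positivity)]
        field_simp
      · rw [show w14 s = (π/2)*(1-s) from by simp [w14, h], w14_zero]
        rw [show (π/2)*(1-s) - π/2 = -((π/2)*s) by ring, abs_neg,
          abs_of_pos (by positivity)]
        field_simp
    exact Tendsto.congr' (by filter_upwards [this] with s hs using hs.symm)
      tendsto_const_nhds
end

section
/- Define p, q : ℝ → ℝ by p(s) = 0 if s is rational and p(s) = s·log 4 if s is irrational, and q(s) = 4^s − 1 if s is rational and q(s) = (s·log 4)² if s is irrational. Then: (a) there is no L ∈ ℝ with Tendsto (fun s => p(s)/s) (𝓝[>] 0) (𝓝 L); (b) there is no L ∈ ℝ with Tendsto (fun s => q(s)/s) (𝓝[>] 0) (𝓝 L); (c) Tendsto (fun s => min (p(s)) (q(s)) / s) (𝓝[>] 0) (𝓝 0); (d) Tendsto (fun s => max (p(s)) (q(s)) / s) (𝓝[>] 0) (𝓝 (log 4)). Hence the gH-difference quotient [min(p(s), q(s))/s, max(p(s), q(s))/s] converges to the interval [0, log 4] although neither endpoint difference quotient p(s)/s nor q(s)/s converges. -/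
open Filter Topology Real Classical

/-- Lower endpoint increment along the geodesic `γ(s) = 2^s I₂`. -/
noncomputable def p15 : ℝ → ℝ := fun s =>
  if s ∈ Set.range ((↑) : ℚ → ℝ) then 0 else s * Real.log 4

/-- Upper endpoint increment along the geodesic `γ(s) = 2^s I₂`. -/
noncomputable def q15 : ℝ → ℝ := fun s =>
  if s ∈ Set.range ((↑) : ℚ → ℝ) then (4 : ℝ) ^ s - 1 else (s * Real.log 4) ^ 2

private lemma log4_pos : (0:ℝ) < Real.log 4 := Real.log_pos (by norm_num)

/-- The rational test sequence. -/
private lemma hu_tendsto : Tendsto (fun n : ℕ => (1:ℝ)/(n+1)) atTop (𝓝[>] 0) := by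
  apply tendsto_nhdsWithin_of_tendsto_nhds_of_eventually_within
  · exact tendsto_one_div_add_atTop_nhds_zero_nat
  · filter_upwards with n
    exact div_pos one_pos (by positivity : (0:ℝ) < (n:ℝ)+1)

private lemma hu_rat (n : ℕ) : (1:ℝ)/(n+1) ∈ Set.range ((↑) : ℚ → ℝ) :=
  ⟨((n:ℚ)+1)⁻¹, by push_cast; rw [one_div]⟩

/-- The irrational test sequence. -/
private lemma hv_tendsto : Tendsto (fun n : ℕ => Real.sqrt 2/(n+1)) atTop (𝓝[>] 0) := by
  apply tendsto_nhdsWithin_of_tendsto_nhds_of_eventually_within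
  · have := tendsto_one_div_add_atTop_nhds_zero_nat.const_mul (Real.sqrt 2)
    simpa [div_eq_mul_inv] using this
  · filter_upwards with n
    exact div_pos (Real.sqrt_pos.2 (by norm_num)) (by positivity)

private lemma hv_irrat (n : ℕ) : Real.sqrt 2/(n+1) ∉ Set.range ((↑) : ℚ → ℝ) := by
  have : Irrational (Real.sqrt 2 / (n+1 : ℕ)) :=
    irrational_sqrt_two.div_natCast (Nat.succ_ne_zero n)
  simpa [Irrational, Nat.cast_add] using this

private lemma hv_pos (n : ℕ) : (0:ℝ) < Real.sqrt 2/(n+1) :=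
  div_pos (Real.sqrt_pos.2 (by norm_num)) (by positivity)

/-- The difference quotient of `4^s` tends to `log 4`. -/
private lemma hg_tendsto :
    Tendsto (fun s : ℝ => ((4:ℝ) ^ s - 1) / s) (𝓝[>] 0) (𝓝 (Real.log 4)) := by
  have h : HasDerivAt (fun x : ℝ => (4:ℝ) ^ x) (Real.log 4) 0 := by
    have := (Real.hasStrictDerivAt_const_rpow (by norm_num : (0:ℝ) < 4) 0).hasDerivAt
    simpa using this
  have h' := hasDerivAt_iff_tendsto_slope.mp h
  have h'' := h'.mono_left
    (nhdsWithin_mono 0 (fun x hx => ne_of_gt hx : Set.Ioi (0:ℝ) ⊆ {0}ᶜ))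
  refine h''.congr fun s => ?_
  simp [slope_def_field, Real.rpow_zero]

private lemma div_id_pos {s : ℝ} (hs : 0 < s) : (s * Real.log 4) / s = Real.log 4 := by
  rw [mul_comm, mul_div_assoc, div_self (ne_of_gt hs), mul_one]

/-- Neither endpoint difference quotient converges, but the gH-difference
quotient `[min(p,q)/s, max(p,q)/s]` converges to `[0, log 4]`. (Counterexample
to the necessity claim in Lemma 3.2 of S.-L. Chen.) -/
theorem gH_converges_endpoints_do_not :
    (¬∃ L : ℝ, Tendsto (fun s => p15 s / s) (𝓝[>] 0) (𝓝 L)) ∧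
      (¬∃ L : ℝ, Tendsto (fun s => q15 s / s) (𝓝[>] 0) (𝓝 L)) ∧
      Tendsto (fun s => min (p15 s) (q15 s) / s) (𝓝[>] 0) (𝓝 0) ∧
      Tendsto (fun s => max (p15 s) (q15 s) / s) (𝓝[>] 0) (𝓝 (Real.log 4)) := by
  refine ⟨?_, ?_, ?_, ?_⟩
  · rintro ⟨L, hL⟩
    have h1 : Tendsto (fun n : ℕ => p15 ((1:ℝ)/(n+1)) / ((1:ℝ)/(n+1))) atTop (𝓝 L) :=
      hL.comp hu_tendsto
    have e1 : ∀ n : ℕ, p15 ((1:ℝ)/(n+1)) / ((1:ℝ)/(n+1)) = 0 := by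
      intro n
      simp only [p15]
      rw [if_pos (hu_rat n), zero_div]
    have hL0 : L = 0 := tendsto_nhds_unique (h1.congr e1) tendsto_const_nhds
    have h2 : Tendsto (fun n : ℕ => p15 (Real.sqrt 2/(n+1)) / (Real.sqrt 2/(n+1))) atTop (𝓝 L) :=
      hL.comp hv_tendsto
    have e2 : ∀ n : ℕ, p15 (Real.sqrt 2/(n+1)) / (Real.sqrt 2/(n+1)) = Real.log 4 := by
      intro n
      simp only [p15]
      rw [if_neg (hv_irrat n), div_id_pos (hv_pos n)]
    have hL4 : L = Real.log 4 := tendsto_nhds_unique (h2.congr e2) tendsto_const_nhds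
    rw [hL0] at hL4
    exact (ne_of_gt log4_pos) hL4.symm
  · rintro ⟨L, hL⟩
    have h1 : Tendsto (fun n : ℕ => q15 ((1:ℝ)/(n+1)) / ((1:ℝ)/(n+1))) atTop (𝓝 L) :=
      hL.comp hu_tendsto
    have h1' : Tendsto (fun n : ℕ => q15 ((1:ℝ)/(n+1)) / ((1:ℝ)/(n+1))) atTop
        (𝓝 (Real.log 4)) := by
      have hc := hg_tendsto.comp hu_tendsto
      refine hc.congr fun n => ?_
      simp only [Function.comp, q15]
      rw [if_pos (hu_rat n)]
    have hL4 : L = Real.log 4 := tendsto_nhds_unique h1 h1'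
    have h2 : Tendsto (fun n : ℕ => q15 (Real.sqrt 2/(n+1)) / (Real.sqrt 2/(n+1))) atTop
        (𝓝 L) := hL.comp hv_tendsto
    have h2' : Tendsto (fun n : ℕ => q15 (Real.sqrt 2/(n+1)) / (Real.sqrt 2/(n+1))) atTop
        (𝓝 0) := by
      have key : ∀ n : ℕ, q15 (Real.sqrt 2/(n+1)) / (Real.sqrt 2/(n+1))
          = (Real.sqrt 2/(n+1)) * (Real.log 4)^2 := by
        intro n
        simp only [q15]
        rw [if_neg (hv_irrat n)]
        have h0 := ne_of_gt (hv_pos n)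
        field_simp
      have hv0 : Tendsto (fun n : ℕ => Real.sqrt 2/(n+1)) atTop (𝓝 0) :=
        hv_tendsto.mono_right nhdsWithin_le_nhds
      have := hv0.mul_const ((Real.log 4)^2)
      rw [zero_mul] at this
      exact this.congr fun n => (key n).symm
    have hL0 : L = 0 := tendsto_nhds_unique h2 h2'
    rw [hL0] at hL4
    exact (ne_of_gt log4_pos) hL4.symm
  · -- min tends to 0
    have hupper : Tendsto (fun s : ℝ => s * (Real.log 4)^2) (𝓝[>] 0) (𝓝 0) := by
      have : Tendsto (fun s : ℝ => s * (Real.log 4)^2) (𝓝 0) (𝓝 (0 * (Real.log 4)^2)) :=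
        (continuous_id.mul continuous_const).tendsto 0
      rw [zero_mul] at this
      exact this.mono_left nhdsWithin_le_nhds
    apply tendsto_of_tendsto_of_tendsto_of_le_of_le' tendsto_const_nhds hupper
    · filter_upwards [self_mem_nhdsWithin] with s (hs : 0 < s)
      have hp : 0 ≤ p15 s := by
        simp only [p15]; split
        · exact le_rfl
        · exact mul_nonneg hs.le log4_pos.le
      have hq : 0 ≤ q15 s := by
        simp only [q15]; split
        · have : (1:ℝ) ≤ (4:ℝ) ^ s := Real.one_le_rpow (by norm_num) hs.le
          linarith
        · positivity
      exact div_nonneg (le_min hp hq) hs.le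
    · filter_upwards [self_mem_nhdsWithin] with s (hs : 0 < s)
      have hmin : min (p15 s) (q15 s) ≤ s * (Real.log 4)^2 * s := by
        by_cases h : s ∈ Set.range ((↑) : ℚ → ℝ)
        · have hp : p15 s = 0 := if_pos h
          calc min (p15 s) (q15 s) ≤ p15 s := min_le_left _ _
            _ = 0 := hp
            _ ≤ s * (Real.log 4)^2 * s :=
                mul_nonneg (mul_nonneg hs.le (sq_nonneg (Real.log 4))) hs.le
        · have hq : q15 s = (s * Real.log 4)^2 := if_neg h
          calc min (p15 s) (q15 s) ≤ q15 s := min_le_right _ _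
            _ = (s * Real.log 4)^2 := hq
            _ = s * (Real.log 4)^2 * s := by ring
      rw [div_le_iff₀ hs]
      exact hmin
  · -- max tends to log 4
    have hmin : Tendsto (fun s : ℝ => min (((4:ℝ)^s - 1)/s) (Real.log 4)) (𝓝[>] 0)
        (𝓝 (Real.log 4)) := by
      have := hg_tendsto.min (tendsto_const_nhds : Tendsto (fun _ : ℝ => Real.log 4) (𝓝[>] (0:ℝ)) (𝓝 (Real.log 4)))
      simpa using this
    have hmax : Tendsto (fun s : ℝ => max (((4:ℝ)^s - 1)/s) (Real.log 4)) (𝓝[>] 0)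
        (𝓝 (Real.log 4)) := by
      have := hg_tendsto.max (tendsto_const_nhds : Tendsto (fun _ : ℝ => Real.log 4) (𝓝[>] (0:ℝ)) (𝓝 (Real.log 4)))
      simpa using this
    have hkey : ∀ s : ℝ, s ∈ Set.Ioo (0:ℝ) (1/Real.log 4) →
        max (p15 s) (q15 s) / s
          = if s ∈ Set.range ((↑) : ℚ → ℝ) then ((4:ℝ)^s - 1)/s else Real.log 4 := by
      intro s ⟨hs0, hs1⟩
      by_cases h : s ∈ Set.range ((↑) : ℚ → ℝ)
      · have hp : p15 s = 0 := if_pos h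
        have hq : q15 s = (4:ℝ)^s - 1 := if_pos h
        have h1 : (1:ℝ) ≤ (4:ℝ) ^ s := Real.one_le_rpow (by norm_num) hs0.le
        rw [hp, hq, if_pos h, max_eq_right (by linarith)]
      · have hp : p15 s = s * Real.log 4 := if_neg h
        have hq : q15 s = (s * Real.log 4)^2 := if_neg h
        have hsl : s * Real.log 4 < 1 := (lt_div_iff₀ log4_pos).mp hs1
        have hsl0 : 0 ≤ s * Real.log 4 := mul_nonneg hs0.le log4_pos.le
        have hsq : (s * Real.log 4)^2 ≤ s * Real.log 4 := by nlinarith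
        rw [hp, hq, if_neg h, max_eq_left hsq, div_id_pos hs0]
    have hmem : Set.Ioo (0:ℝ) (1/Real.log 4) ∈ 𝓝[>] (0:ℝ) :=
      Ioo_mem_nhdsGT_of_mem (Set.left_mem_Ico.mpr (by positivity))
    apply tendsto_of_tendsto_of_tendsto_of_le_of_le' hmin hmax
    · filter_upwards [hmem] with s hs
      rw [hkey s hs]
      split
      · exact min_le_left _ _
      · exact min_le_right _ _
    · filter_upwards [hmem] with s hs
      rw [hkey s hs]
      split
      · exact le_max_left _ _
      · exact le_max_right _ _
end

section
/- Let f_c, f_w : ℝ → ℝ both be convex at 0 on [0,1] (i.e., g(s·x) ≤ (1 − s)·g(0) + s·g(x) for all x ∈ [0,1], s ∈ (0,1), for g = f_c and g = f_w), and let f_w be monotone nondecreasing on [0,1]. Then the gH-difference quotient Q(s) = ⟨(f_c(s) − f_c(0))/s, |f_w(s) − f_w(0)|/s⟩ is nondecreasing with respect to the lexicographic order: for all 0 < s₁ < s₂ ≤ 1, toLex ((f_c(s₁) − f_c(0))/s₁, |f_w(s₁) − f_w(0)|/s₁) ≤ toLex ((f_c(s₂) − f_c(0))/s₂, |f_w(s₂)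 − f_w(0)|/s₂) in ℝ ×ₗ ℝ. -/
private lemma quot_mono (g : ℝ → ℝ)
    (hg : ∀ x ∈ Set.Icc (0 : ℝ) 1, ∀ s ∈ Set.Ioo (0 : ℝ) 1,
      g (s * x) ≤ (1 - s) * g 0 + s * g x)
    (s₁ s₂ : ℝ) (h₁ : 0 < s₁) (h₁₂ : s₁ < s₂) (h₂ : s₂ ≤ 1) :
    (g s₁ - g 0) / s₁ ≤ (g s₂ - g 0) / s₂ := by
  have hs₂ : 0 < s₂ := h₁.trans h₁₂
  have hs : s₁ / s₂ ∈ Set.Ioo (0 : ℝ) 1 :=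
    ⟨div_pos h₁ hs₂, (div_lt_one hs₂).mpr h₁₂⟩
  have hx : s₂ ∈ Set.Icc (0 : ℝ) 1 := ⟨hs₂.le, h₂⟩
  have key := hg s₂ hx (s₁ / s₂) hs
  rw [div_mul_cancel₀ _ hs₂.ne'] at key
  have : g s₁ - g 0 ≤ (s₁ / s₂) * (g s₂ - g 0) := by nlinarith
  have h3 := mul_le_mul_of_nonneg_right this hs₂.le
  have h4 : s₁ / s₂ * (g s₂ - g 0) * s₂ = (g s₂ - g 0) * s₁ := by
    field_simp
  rw [div_le_div_iff₀ h₁ hs₂]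
  linarith

/-- For a cw-convex interval-valued function (center and half-width both convex
at `0` on `[0,1]`) whose half-width is nondecreasing on `[0,1]`, the
gH-difference quotient `Q(s) = ⟨(f_c(s)-f_c(0))/s, |f_w(s)-f_w(0)|/s⟩` is
nondecreasing in the lexicographic (≤^min) order. -/
theorem gH_quotient_monotone (fc fw : ℝ → ℝ)
    (hfc : ∀ x ∈ Set.Icc (0 : ℝ) 1, ∀ s ∈ Set.Ioo (0 : ℝ) 1,
      fc (s * x) ≤ (1 - s) * fc 0 + s * fc x)
    (hfw : ∀ x ∈ Set.Icc (0 : ℝ) 1, ∀ s ∈ Set.Ioo (0 : ℝ) 1,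
      fw (s * x) ≤ (1 - s) * fw 0 + s * fw x)
    (hmono : MonotoneOn fw (Set.Icc (0 : ℝ) 1))
    (s₁ s₂ : ℝ) (h₁ : 0 < s₁) (h₁₂ : s₁ < s₂) (h₂ : s₂ ≤ 1) :
    toLex ((fc s₁ - fc 0) / s₁, |fw s₁ - fw 0| / s₁) ≤
      toLex ((fc s₂ - fc 0) / s₂, |fw s₂ - fw 0| / s₂) := by
  have hs₂ : 0 < s₂ := h₁.trans h₁₂
  have hc := quot_mono fc hfc s₁ s₂ h₁ h₁₂ h₂
  have hw := quot_mono fw hfw s₁ s₂ h₁ h₁₂ h₂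
  have hm₁ : fw 0 ≤ fw s₁ :=
    hmono ⟨le_refl 0, zero_le_one⟩ ⟨h₁.le, h₁₂.le.trans h₂⟩ h₁.le
  have hm₂ : fw 0 ≤ fw s₂ := hmono ⟨le_refl 0, zero_le_one⟩ ⟨hs₂.le, h₂⟩ hs₂.le
  rw [abs_of_nonneg (by linarith), abs_of_nonneg (by linarith)]
  rcases eq_or_lt_of_le hc with h | h
  · exact Prod.Lex.le_iff.mpr (Or.inr ⟨h, hw⟩)
  · exact Prod.Lex.le_iff.mpr (Or.inl h)
end

section
/- Let f_c, f_w : ℝ → ℝ both be convex at 0 on [0,1] (i.e., g(s·x) ≤ (1 − s)·g(0) + s·g(x) for all x ∈ [0,1], s ∈ (0,1), for g = f_c and g = f_w), let f_w be monotone nondecreasing on [0,1], and suppose Tendsto (fun s => (f_c(s) − f_c(0))/s) (𝓝[>] 0) (𝓝 L_c) and Tendsto (fun s => (f_w(s) − f_w(0))/s) (𝓝[>] 0) (𝓝 L_w). Then L_w ≥ 0 and, in the lexicographic order on ℝ × ℝ, toLex (L_c, |L_w|) ≤ toLex (f_c(1) − f_c(0), |f_w(1) − f_w(0)|); i.e.,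 the gH-directional derivative satisfies Df(x₀; X) ≤^min f(x) ⊖_gH f(x₀). -/
open Filter Topology

/-- For a cw-convex interval-valued function with nondecreasing half-width,
the gH-directional derivative satisfies `Df(x₀;X) ≤^min f(x) ⊖_gH f(x₀)`. -/
theorem gH_gradient_inequality (fc fw : ℝ → ℝ) (Lc Lw : ℝ)
    (hfc : ∀ x ∈ Set.Icc (0 : ℝ) 1, ∀ s ∈ Set.Ioo (0 : ℝ) 1,
      fc (s * x) ≤ (1 - s) * fc 0 + s * fc x)
    (hfw : ∀ x ∈ Set.Icc (0 : ℝ) 1, ∀ s ∈ Set.Ioo (0 : ℝ) 1,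
      fw (s * x) ≤ (1 - s) * fw 0 + s * fw x)
    (hmono : MonotoneOn fw (Set.Icc (0 : ℝ) 1))
    (hLc : Tendsto (fun s => (fc s - fc 0) / s) (𝓝[>] 0) (𝓝 Lc))
    (hLw : Tendsto (fun s => (fw s - fw 0) / s) (𝓝[>] 0) (𝓝 Lw)) :
    0 ≤ Lw ∧
      toLex (Lc, |Lw|) ≤ toLex (fc 1 - fc 0, |fw 1 - fw 0|) := by
  have hIoo : Set.Ioo (0:ℝ) 1 ∈ 𝓝[>] (0:ℝ) :=
    Ioo_mem_nhdsGT_of_mem (by constructor <;> norm_num)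
  -- Lw ≥ 0
  have hLw0 : 0 ≤ Lw := by
    refine ge_of_tendsto hLw (Filter.eventually_of_mem hIoo ?_)
    intro s hs
    have h1 : fw 0 ≤ fw s := hmono (by constructor <;> norm_num)
      ⟨le_of_lt hs.1, le_of_lt hs.2⟩ hs.1.le
    exact div_nonneg (by linarith) hs.1.le
  -- Lc ≤ fc 1 - fc 0
  have hc : Lc ≤ fc 1 - fc 0 := by
    refine le_of_tendsto hLc (Filter.eventually_of_mem hIoo ?_)
    intro s hs
    have h := hfc 1 (by constructor <;> norm_num) s hs
    rw [mul_one] at h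
    rw [div_le_iff₀ hs.1]
    nlinarith
  -- Lw ≤ fw 1 - fw 0
  have hw : Lw ≤ fw 1 - fw 0 := by
    refine le_of_tendsto hLw (Filter.eventually_of_mem hIoo ?_)
    intro s hs
    have h := hfw 1 (by constructor <;> norm_num) s hs
    rw [mul_one] at h
    rw [div_le_iff₀ hs.1]
    nlinarith
  have hw01 : fw 0 ≤ fw 1 := hmono (by constructor <;> norm_num)
    (by constructor <;> norm_num) (by norm_num)
  refine ⟨hLw0, ?_⟩
  rw [Prod.Lex.le_iff]
  rcases lt_or_eq_of_le hc with h | h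
  · exact Or.inl h
  · refine Or.inr ⟨h, ?_⟩
    rw [abs_of_nonneg hLw0, abs_of_nonneg (by linarith : (0:ℝ) ≤ fw 1 - fw 0)]
    exact hw
end
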